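/- Let d ≥ 1, let K ⊆ ℝ^d be a convex, compact set contained in the nonnegative orthant that is down-closed with lower bound 0, and suppose there exists r > 0 with r·B^d_{≥0} ⊆ K. Let δ > 0 be small enough that α := (√d+1)δ/r < 1, and define K' := (1−α)·K + δ·𝟙. Then K' ⊆ K, and K' is a δ-interior of K: for every x ∈ K', the closed Euclidean ball of radius δ centered at x is contained in K (equivalently, the distance from x to the topological boundary of K is at least δ). -/

import Mathlib

open Metric Set

/-- The all-ones vector in `ℝ^d`. -/
def allOnes (d : ℕ) : EuclideanSpace ℝ (Fin d) := WithLp.toLp 2 (fun _ => 1)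

/-- A set `P ⊆ ℝ^d` is down-closed with lower bound `u`: `u ∈ P`, every `y ∈ P`
satisfies `u ≤ y` coordinatewise, and whenever `u ≤ x ≤ y` with `y ∈ P`, also `x ∈ P`. -/
def DownClosedWithLB {d : ℕ} (u : EuclideanSpace ℝ (Fin d)) (P : Set (EuclideanSpace ℝ (Fin d))) :
    Prop :=
  u ∈ P ∧ (∀ y ∈ P, ∀ i, u i ≤ y i) ∧
    ∀ x y : EuclideanSpace ℝ (Fin d), y ∈ P → (∀ i, u i ≤ x i) → (∀ i, x i ≤ y i) → x ∈ P

lemma allOnes_norm (d : ℕ) : ‖allOnes d‖ = Real.sqrt d := by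
  rw [EuclideanSpace.norm_eq]
  simp [allOnes]

lemma coord_abs_le_norm {d : ℕ} (v : EuclideanSpace ℝ (Fin d)) (i : Fin d) : |v i| ≤ ‖v‖ := by
  rw [EuclideanSpace.norm_eq]
  have h1 : |v i| = Real.sqrt (‖v i‖ ^ 2) := by
    rw [Real.sqrt_sq_eq_abs, Real.norm_eq_abs, abs_abs]
  rw [h1]
  apply Real.sqrt_le_sqrt
  exact Finset.single_le_sum (f := fun j => ‖v j‖ ^ 2) (fun j _ => by positivity)
    (Finset.mem_univ i)

theorem shrunk_translated_set_is_delta_interior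
    (d : ℕ) (hd : 1 ≤ d) (K : Set (EuclideanSpace ℝ (Fin d)))
    (hconv : Convex ℝ K) (hcomp : IsCompact K)
    (hpos : K ⊆ {x | ∀ i, 0 ≤ x i})
    (hdown : DownClosedWithLB (0 : EuclideanSpace ℝ (Fin d)) K)
    (r : ℝ) (hr : 0 < r)
    (hrK : (fun x : EuclideanSpace ℝ (Fin d) => r • x) ''
        (closedBall (0 : EuclideanSpace ℝ (Fin d)) 1 ∩ {x | ∀ i, 0 ≤ x i}) ⊆ K)
    (δ : ℝ) (hδ : 0 < δ)
    (α : ℝ) (hα : α = (Real.sqrt d + 1) * δ / r) (hα1 : α < 1)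
    (K' : Set (EuclideanSpace ℝ (Fin d)))
    (hK' : K' = (fun x : EuclideanSpace ℝ (Fin d) => (1 - α) • x + δ • allOnes d) '' K) :
    K' ⊆ K ∧ ∀ x ∈ K', closedBall x δ ⊆ K := by
  have hsd : (0:ℝ) < Real.sqrt d + 1 := by positivity
  have hαpos : 0 < α := by rw [hα]; positivity
  have main : ∀ x ∈ K', closedBall x δ ⊆ K := by
    intro x' hx' z hz
    rw [hK'] at hx'
    obtain ⟨x, hx, rfl⟩ := hx'
    set v : EuclideanSpace ℝ (Fin d) := z - ((1 - α) • x + δ • allOnes d) with hv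
    have hvnorm : ‖v‖ ≤ δ := by
      rw [mem_closedBall, dist_eq_norm] at hz
      exact hz
    set w : EuclideanSpace ℝ (Fin d) := δ • allOnes d + v with hw
    have hwpos : ∀ i, 0 ≤ w i := by
      intro i
      have h1 : |v i| ≤ δ := (coord_abs_le_norm v i).trans hvnorm
      have : w i = δ + v i := by simp [hw, allOnes]
      rw [this]
      linarith [abs_le.mp h1 |>.1]
    have hwnorm : ‖w‖ ≤ α * r := by
      have h1 : ‖w‖ ≤ ‖δ • allOnes d‖ + ‖v‖ := norm_add_le _ _
      have h2 : ‖δ • allOnes d‖ = δ * Real.sqrt d := by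
        rw [norm_smul, allOnes_norm, Real.norm_eq_abs, abs_of_pos hδ]
      have h3 : α * r = (Real.sqrt d + 1) * δ := by
        rw [hα, div_mul_cancel₀ _ hr.ne']
      rw [h3]; rw [h2] at h1
      nlinarith
    -- y := (α r)⁻¹ • w lies in the unit ball ∩ orthant
    set y : EuclideanSpace ℝ (Fin d) := (α * r)⁻¹ • w with hy
    have hαr : 0 < α * r := mul_pos hαpos hr
    have hymem : y ∈ closedBall (0 : EuclideanSpace ℝ (Fin d)) 1 ∩ {x | ∀ i, 0 ≤ x i} := by
      constructor
      · rw [mem_closedBall, dist_zero_right, hy, norm_smul, Real.norm_eq_abs,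
          abs_of_pos (inv_pos.mpr hαr)]
        rw [inv_mul_le_iff₀ hαr, mul_one]
        exact hwnorm
      · intro i
        have : y i = (α * r)⁻¹ * w i := rfl
        rw [this]
        exact mul_nonneg (inv_pos.mpr hαr).le (hwpos i)
    have hryK : r • y ∈ K := hrK ⟨y, hymem, rfl⟩
    have hry : r • y = α⁻¹ • w := by
      rw [hy, smul_smul, mul_inv, ← mul_assoc, mul_comm r α⁻¹, mul_assoc,
        mul_inv_cancel₀ hr.ne', mul_one]
    rw [hry] at hryK
    have hzeq : z = (1 - α) • x + α • (α⁻¹ • w) := by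
      rw [smul_smul, mul_inv_cancel₀ hαpos.ne', one_smul, hw]
      simp only [hv]
      abel
    rw [hzeq]
    exact hconv hx hryK (by linarith) hαpos.le (by ring)
  refine ⟨fun x hx => main x hx (mem_closedBall_self hδ.le), main⟩
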